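/- Let ℓ be an odd prime, d a unit of ℤ/ℓ²ℤ, and t ∈ ℤ/ℓ²ℤ. Then the number of matrices γ ∈ GL₂(ℤ/ℓ²ℤ) with det(γ) = d and tr(γ) = t equals: ℓ⁴ + ℓ³ − ℓ² if t² − 4d = 0; ℓ⁴ − ℓ² if t² − 4d ≠ 0 and ℓ divides t² − 4d; ℓ⁴ + ℓ³ if t² − 4d is a quadratic residue; and ℓ⁴ − ℓ³ if t² − 4d is a quadratic non-residue. -/

import Mathlib

set_option maxHeartbeats 1000000


private lemma card_part {α : Type*} [Finite α] (P Q : α → Prop) :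
    Nat.card {x : α // P x} = Nat.card {x : α // P x ∧ Q x} + Nat.card {x : α // P x ∧ ¬ Q x} := by
  classical
  rw [← Nat.card_sum]
  exact Nat.card_congr ((Equiv.sumCompl (fun y : {x // P x} => Q y.1)).symm.trans
    (Equiv.sumCongr (Equiv.subtypeSubtypeEquivSubtypeInter P Q)
      (Equiv.subtypeSubtypeEquivSubtypeInter P (fun x => ¬ Q x))))

private noncomputable def units_equiv_subtype {M : Type*} [Monoid M] (P : M → Prop)
    (h : ∀ m, P m → IsUnit m) : {u : Mˣ // P u.val} ≃ {m : M // P m} where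
  toFun u := ⟨u.1.1, u.2⟩
  invFun m := ⟨(h m.1 m.2).unit, by rw [IsUnit.unit_spec]; exact m.2⟩
  left_inv u := Subtype.ext (Units.ext (h _ u.2).unit_spec)
  right_inv m := Subtype.ext (h m.1 m.2).unit_spec

private lemma helper_sigma {α β : Type*} [Fintype α] [Fintype β] (P : α → β → Prop) :
    Nat.card {x : α × β // P x.1 x.2} = ∑ a : α, Nat.card {b : β // P a b} := by
  classical
  rw [Nat.card_congr (Equiv.subtypeProdEquivSigmaSubtype P), Nat.card_eq_fintype_card,
    Fintype.card_sigma]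
  exact Finset.sum_congr rfl fun a _ => Nat.card_eq_fintype_card.symm

private lemma card_mul_left_unit {R : Type*} [CommRing R] [Finite R] (m : R) :
    Nat.card {q : R × R // q.1 * q.2 = m ∧ IsUnit q.1} = Nat.card Rˣ := by
  refine (Nat.card_congr (Equiv.ofBijective
    (fun u : Rˣ => (⟨(u, (↑u⁻¹ : R) * m), by rw [← mul_assoc, Units.mul_inv, one_mul], u.isUnit⟩ :
      {q : R × R // q.1 * q.2 = m ∧ IsUnit q.1})) ⟨?_, ?_⟩)).symm
  · intro u v huv
    have : (u : R) = v := congrArg (fun q => q.val.1) huv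
    exact Units.ext this
  · rintro ⟨⟨b, c⟩, hbc, hb⟩
    refine ⟨hb.unit, Subtype.ext (Prod.ext hb.unit_spec ?_)⟩
    show (↑hb.unit⁻¹ : R) * m = c
    have hbu : (hb.unit : R) = b := hb.unit_spec
    calc (↑hb.unit⁻¹ : R) * m = (↑hb.unit⁻¹ : R) * (b * c) := by rw [hbc]
    _ = ((↑hb.unit⁻¹ : R) * ↑hb.unit) * c := by rw [hbu, mul_assoc]
    _ = c := by rw [Units.inv_mul, one_mul]

private lemma card_mul_right_unit {R : Type*} [CommRing R] [Finite R] (m : R) :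
    Nat.card {q : R × R // q.1 * q.2 = m ∧ IsUnit q.2} = Nat.card Rˣ := by
  rw [← card_mul_left_unit m]
  refine Nat.card_congr (Equiv.subtypeEquiv (Equiv.prodComm R R) fun q => ?_)
  simp [mul_comm, and_comm]

private lemma N_mul_unit {R : Type*} [CommRing R] [Finite R] (c : Rˣ) (m : R) :
    Nat.card {q : R × R // q.1 * q.2 = (c : R) * m} = Nat.card {q : R × R // q.1 * q.2 = m} := by
  refine Nat.card_congr ⟨fun q => ⟨((↑c⁻¹ : R) * q.1.1, q.1.2), ?_⟩,
    fun q => ⟨((c : R) * q.1.1, q.1.2), ?_⟩, fun q => ?_, fun q => ?_⟩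
  · rw [mul_assoc, q.2, ← mul_assoc, Units.inv_mul, one_mul]
  · rw [mul_assoc, q.2]
  · refine Subtype.ext (Prod.ext ?_ rfl)
    show (c : R) * ((↑c⁻¹ : R) * q.1.1) = q.1.1
    rw [← mul_assoc, Units.mul_inv, one_mul]
  · refine Subtype.ext (Prod.ext ?_ rfl)
    show (↑c⁻¹ : R) * ((c : R) * q.1.1) = q.1.1
    rw [← mul_assoc, Units.inv_mul, one_mul]

private lemma zmod_lsq_zero {ℓ : ℕ} : (ℓ : ZMod (ℓ^2)) * (ℓ : ZMod (ℓ^2)) = 0 := by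
  have h : ((ℓ^2 : ℕ) : ZMod (ℓ^2)) = 0 := ZMod.natCast_self _
  push_cast at h
  rw [← h]; ring

private lemma zmod_not_unit_ell {ℓ : ℕ} (hℓ : ℓ.Prime) : ¬ IsUnit (ℓ : ZMod (ℓ^2)) := by
  haveI : NeZero ℓ := ⟨hℓ.pos.ne'⟩
  haveI : Fact (1 < ℓ^2) := ⟨one_lt_pow₀ hℓ.one_lt two_ne_zero⟩
  intro hu
  have h0 : IsUnit ((0 : ZMod (ℓ^2))) := zmod_lsq_zero ▸ hu.mul hu
  rw [isUnit_zero_iff] at h0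
  exact zero_ne_one h0

private lemma zmod_unit_iff {ℓ : ℕ} (hℓ : ℓ.Prime) (x : ZMod (ℓ^2)) :
    IsUnit x ↔ ¬ (ℓ : ZMod (ℓ^2)) ∣ x := by
  haveI : NeZero ℓ := ⟨hℓ.pos.ne'⟩
  constructor
  · rintro hx ⟨y, hy⟩
    exact zmod_not_unit_ell hℓ (isUnit_of_mul_isUnit_left (hy ▸ hx))
  · intro h
    have hval : ¬ (ℓ ∣ x.val) := by
      rintro ⟨k, hk⟩
      exact h ⟨(k : ZMod (ℓ^2)), by rw [← ZMod.natCast_zmod_val x, hk]; push_cast; ring⟩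
    rw [← ZMod.natCast_zmod_val x, ZMod.isUnit_iff_coprime]
    rw [Nat.coprime_pow_right_iff (by norm_num)]
    exact Nat.coprime_comm.mp (hℓ.coprime_iff_not_dvd.mpr hval)

private lemma zmod_mul_zero {ℓ : ℕ} {x y : ZMod (ℓ^2)}
    (hx : (ℓ : ZMod (ℓ^2)) ∣ x) (hy : (ℓ : ZMod (ℓ^2)) ∣ y) : x * y = 0 := by
  obtain ⟨a, rfl⟩ := hx
  obtain ⟨b, rfl⟩ := hy
  calc (ℓ : ZMod (ℓ^2)) * a * ((ℓ : ZMod (ℓ^2)) * b)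
      = ((ℓ : ZMod (ℓ^2)) * (ℓ : ZMod (ℓ^2))) * (a * b) := by ring
    _ = 0 := by rw [zmod_lsq_zero, zero_mul]

private lemma zmod_dvd_mul {ℓ : ℕ} (hℓ : ℓ.Prime) {x y : ZMod (ℓ^2)}
    (h : (ℓ : ZMod (ℓ^2)) ∣ x * y) : (ℓ : ZMod (ℓ^2)) ∣ x ∨ (ℓ : ZMod (ℓ^2)) ∣ y := by
  by_contra hc
  push_neg at hc
  have hx := (zmod_unit_iff hℓ x).mpr hc.1
  have hy := (zmod_unit_iff hℓ y).mpr hc.2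
  exact (zmod_unit_iff hℓ (x * y)).mp (hx.mul hy) h

private lemma zmod_card_units {ℓ : ℕ} (hℓ : ℓ.Prime) :
    Nat.card (ZMod (ℓ^2))ˣ = ℓ^2 - ℓ := by
  haveI : NeZero ℓ := ⟨hℓ.pos.ne'⟩
  rw [Nat.card_eq_fintype_card, ZMod.card_units_eq_totient,
    Nat.totient_prime_pow hℓ (by norm_num)]
  have h2 : ℓ^(2-1) = ℓ := by norm_num
  rw [h2, Nat.mul_sub, mul_one, ← sq]

private lemma zmod_card_units_subtype {ℓ : ℕ} (hℓ : ℓ.Prime) :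
    Nat.card {x : ZMod (ℓ^2) // IsUnit x} = ℓ^2 - ℓ := by
  rw [← zmod_card_units hℓ]
  haveI : NeZero ℓ := ⟨hℓ.pos.ne'⟩
  exact (Nat.card_congr ⟨fun u => ⟨(u : ZMod (ℓ^2)), u.isUnit⟩, fun x => x.2.unit,
    fun u => Units.ext u.isUnit.unit_spec, fun x => Subtype.ext x.2.unit_spec⟩).symm

private lemma zmod_card_nonunits {ℓ : ℕ} (hℓ : ℓ.Prime) :
    Nat.card {x : ZMod (ℓ^2) // ¬ IsUnit x} = ℓ := by
  haveI : NeZero ℓ := ⟨hℓ.pos.ne'⟩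
  classical
  have htot : Nat.card (ZMod (ℓ^2)) =
      Nat.card {x : ZMod (ℓ^2) // IsUnit x} + Nat.card {x : ZMod (ℓ^2) // ¬ IsUnit x} := by
    rw [← Nat.card_sum]
    exact Nat.card_congr (Equiv.sumCompl IsUnit).symm
  rw [Nat.card_eq_fintype_card, ZMod.card, zmod_card_units_subtype hℓ] at htot
  have hle : ℓ ≤ ℓ^2 := Nat.le_self_pow two_ne_zero ℓ
  omega

private lemma zmod_card_dvd {ℓ : ℕ} (hℓ : ℓ.Prime) :
    Nat.card {x : ZMod (ℓ^2) // (ℓ : ZMod (ℓ^2)) ∣ x} = ℓ := by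
  refine Eq.trans ?_ (zmod_card_nonunits hℓ)
  refine Nat.card_congr (Equiv.subtypeEquivRight fun x => ?_)
  rw [zmod_unit_iff hℓ x]; tauto
private lemma zmod_dvd_of_not_unit {ℓ : ℕ} (hℓ : ℓ.Prime) {x : ZMod (ℓ^2)}
    (h : ¬ IsUnit x) : (ℓ : ZMod (ℓ^2)) ∣ x :=
  not_not.mp (mt (zmod_unit_iff hℓ x).mpr h)

private lemma N_unit {ℓ : ℕ} (hℓ : ℓ.Prime) {m : ZMod (ℓ^2)} (hm : IsUnit m) :
    Nat.card {q : ZMod (ℓ^2) × ZMod (ℓ^2) // q.1 * q.2 = m} = ℓ^2 - ℓ := by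
  haveI : NeZero ℓ := ⟨hℓ.pos.ne'⟩
  refine Eq.trans ?_ ((card_mul_left_unit m).trans (zmod_card_units hℓ))
  refine Nat.card_congr (Equiv.subtypeEquivRight fun q => ?_)
  exact ⟨fun h => ⟨h, isUnit_of_mul_isUnit_left (h ▸ hm)⟩, fun h => h.1⟩

private lemma N_mid {ℓ : ℕ} (hℓ : ℓ.Prime) {m : ZMod (ℓ^2)}
    (hm : (ℓ : ZMod (ℓ^2)) ∣ m) (h0 : m ≠ 0) :
    Nat.card {q : ZMod (ℓ^2) × ZMod (ℓ^2) // q.1 * q.2 = m} = 2 * (ℓ^2 - ℓ) := by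
  haveI : NeZero ℓ := ⟨hℓ.pos.ne'⟩
  rw [card_part (fun q : ZMod (ℓ^2) × ZMod (ℓ^2) => q.1 * q.2 = m) (fun q => IsUnit q.1),
    card_mul_left_unit m]
  have h2 : Nat.card {q : ZMod (ℓ^2) × ZMod (ℓ^2) // q.1 * q.2 = m ∧ ¬ IsUnit q.1} =
      Nat.card (ZMod (ℓ^2))ˣ := by
    rw [← card_mul_right_unit m]
    refine Nat.card_congr (Equiv.subtypeEquivRight fun q => ?_)
    constructor
    · rintro ⟨heq, hn1⟩
      refine ⟨heq, ?_⟩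
      by_contra hn2
      exact h0 (heq ▸ zmod_mul_zero (zmod_dvd_of_not_unit hℓ hn1) (zmod_dvd_of_not_unit hℓ hn2))
    · rintro ⟨heq, hu2⟩
      refine ⟨heq, fun hu1 => ?_⟩
      exact (zmod_unit_iff hℓ m).mp (heq ▸ hu1.mul hu2) hm
  rw [h2, zmod_card_units hℓ]; ring

private lemma N_zero {ℓ : ℕ} (hℓ : ℓ.Prime) :
    Nat.card {q : ZMod (ℓ^2) × ZMod (ℓ^2) // q.1 * q.2 = 0} = ℓ * ℓ + 2 * (ℓ^2 - ℓ) := by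
  haveI : NeZero ℓ := ⟨hℓ.pos.ne'⟩
  haveI : Fact (1 < ℓ^2) := ⟨one_lt_pow₀ hℓ.one_lt two_ne_zero⟩
  rw [card_part (fun q : ZMod (ℓ^2) × ZMod (ℓ^2) => q.1 * q.2 = 0) (fun q => IsUnit q.1),
    card_mul_left_unit 0,
    card_part (fun q : ZMod (ℓ^2) × ZMod (ℓ^2) => q.1 * q.2 = 0 ∧ ¬ IsUnit q.1)
      (fun q => IsUnit q.2)]
  have ha : Nat.card {q : ZMod (ℓ^2) × ZMod (ℓ^2) //
      (q.1 * q.2 = 0 ∧ ¬ IsUnit q.1) ∧ IsUnit q.2} = Nat.card (ZMod (ℓ^2))ˣ := by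
    rw [← card_mul_right_unit (0 : ZMod (ℓ^2))]
    refine Nat.card_congr (Equiv.subtypeEquivRight fun q => ?_)
    constructor
    · rintro ⟨⟨heq, _⟩, hu⟩; exact ⟨heq, hu⟩
    · rintro ⟨heq, hu2⟩
      refine ⟨⟨heq, fun hu1 => ?_⟩, hu2⟩
      have h01 : IsUnit ((0 : ZMod (ℓ^2))) := heq ▸ hu1.mul hu2
      rw [isUnit_zero_iff] at h01
      exact zero_ne_one h01
  have hb : Nat.card {q : ZMod (ℓ^2) × ZMod (ℓ^2) //
      (q.1 * q.2 = 0 ∧ ¬ IsUnit q.1) ∧ ¬ IsUnit q.2} = ℓ * ℓ := by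
    have hc : Nat.card {q : ZMod (ℓ^2) × ZMod (ℓ^2) // ¬ IsUnit q.1 ∧ ¬ IsUnit q.2} = ℓ * ℓ := by
      rw [Nat.card_congr (Equiv.subtypeProdEquivProd (p := fun x : ZMod (ℓ^2) => ¬ IsUnit x)
        (q := fun x : ZMod (ℓ^2) => ¬ IsUnit x)), Nat.card_prod, zmod_card_nonunits hℓ]
    refine Eq.trans ?_ hc
    refine Nat.card_congr (Equiv.subtypeEquivRight fun q => ?_)
    constructor
    · rintro ⟨⟨_, h1⟩, h2⟩; exact ⟨h1, h2⟩
    · rintro ⟨h1, h2⟩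
      exact ⟨⟨zmod_mul_zero (zmod_dvd_of_not_unit hℓ h1) (zmod_dvd_of_not_unit hℓ h2), h1⟩, h2⟩
  rw [ha, hb, zmod_card_units hℓ]; ring
private lemma zmod_two_unit {ℓ : ℕ} (hℓ : ℓ.Prime) (hodd : ℓ ≠ 2) :
    IsUnit (2 : ZMod (ℓ^2)) := by
  haveI : NeZero ℓ := ⟨hℓ.pos.ne'⟩
  have h2 : ((2:ℕ) : ZMod (ℓ^2)) = 2 := by norm_num
  rw [← h2, ZMod.isUnit_iff_coprime]
  refine Nat.prime_two.coprime_iff_not_dvd.mpr fun h => ?_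
  exact hodd ((Nat.prime_dvd_prime_iff_eq Nat.prime_two hℓ).mp
    (Nat.prime_two.dvd_of_dvd_pow h)).symm

private def shiftEquiv {R : Type*} [CommRing R] (w : Rˣ) (t : R) : R ≃ R where
  toFun x := (x + t) * (↑w⁻¹ : R)
  invFun a := a * w - t
  left_inv x := by
    show ((x + t) * (↑w⁻¹ : R)) * w - t = x
    rw [mul_assoc, Units.inv_mul, mul_one, add_sub_cancel_right]
  right_inv a := by
    show (a * w - t + t) * (↑w⁻¹ : R) = a
    rw [sub_add_cancel, mul_assoc, Units.mul_inv, mul_one]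

private lemma main_count {ℓ : ℕ} (hℓ : ℓ.Prime) (hodd : ℓ ≠ 2) [NeZero ℓ] [NeZero (ℓ ^ 2)]
    (d : (ZMod (ℓ ^ 2))ˣ) (t : ZMod (ℓ ^ 2)) :
    Nat.card {γ : Matrix.GeneralLinearGroup (Fin 2) (ZMod (ℓ ^ 2)) //
        (γ : Matrix (Fin 2) (Fin 2) (ZMod (ℓ ^ 2))).det = (d : ZMod (ℓ ^ 2)) ∧
        Matrix.trace (γ : Matrix (Fin 2) (Fin 2) (ZMod (ℓ ^ 2))) = t} =
    ∑ x : ZMod (ℓ ^ 2), Nat.card {q : ZMod (ℓ ^ 2) × ZMod (ℓ ^ 2) //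
        q.1 * q.2 = t ^ 2 - 4 * (d : ZMod (ℓ ^ 2)) - x * x} := by
  have hu2 := zmod_two_unit hℓ hodd
  set w : (ZMod (ℓ ^ 2))ˣ := hu2.unit with hwdef
  have hw : (w : ZMod (ℓ ^ 2)) = 2 := hu2.unit_spec
  have e1 : {γ : Matrix.GeneralLinearGroup (Fin 2) (ZMod (ℓ ^ 2)) //
        (γ : Matrix (Fin 2) (Fin 2) (ZMod (ℓ ^ 2))).det = (d : ZMod (ℓ ^ 2)) ∧
        Matrix.trace (γ : Matrix (Fin 2) (Fin 2) (ZMod (ℓ ^ 2))) = t} ≃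
      {M : Matrix (Fin 2) (Fin 2) (ZMod (ℓ ^ 2)) //
        M.det = (d : ZMod (ℓ ^ 2)) ∧ M.trace = t} :=
    units_equiv_subtype (fun M : Matrix (Fin 2) (Fin 2) (ZMod (ℓ ^ 2)) =>
        M.det = (d : ZMod (ℓ ^ 2)) ∧ M.trace = t)
      (fun M hM => (Matrix.isUnit_iff_isUnit_det M).mpr (hM.1 ▸ d.isUnit))
  have e2 : {M : Matrix (Fin 2) (Fin 2) (ZMod (ℓ ^ 2)) //
        M.det = (d : ZMod (ℓ ^ 2)) ∧ M.trace = t} ≃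
      {p : ZMod (ℓ ^ 2) × ZMod (ℓ ^ 2) × ZMod (ℓ ^ 2) //
        p.2.1 * p.2.2 = p.1 * (t - p.1) - (d : ZMod (ℓ ^ 2))} := by
    refine ⟨fun M => ⟨(M.1 0 0, M.1 0 1, M.1 1 0), ?_⟩,
      fun p => ⟨!![p.1.1, p.1.2.1; p.1.2.2, t - p.1.1], ?_, ?_⟩, fun M => ?_, fun p => ?_⟩
    · obtain ⟨M, hdet, htr⟩ := M
      rw [Matrix.det_fin_two] at hdet
      rw [Matrix.trace_fin_two] at htr
      simp only
      linear_combination -hdet + (M 0 0) * htr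
    · rw [Matrix.det_fin_two_of]
      linear_combination -p.2
    · rw [Matrix.trace_fin_two]
      simp
    · obtain ⟨M, hdet, htr⟩ := M
      rw [Matrix.trace_fin_two] at htr
      refine Subtype.ext ?_
      ext i j
      fin_cases i <;> fin_cases j <;> simp <;> linear_combination -htr
    · refine Subtype.ext ?_
      obtain ⟨⟨a, b, c⟩, hp⟩ := p
      simp
  rw [Nat.card_congr (e1.trans e2),
    helper_sigma (fun (a : ZMod (ℓ ^ 2)) (q : ZMod (ℓ ^ 2) × ZMod (ℓ ^ 2)) =>
      q.1 * q.2 = a * (t - a) - (d : ZMod (ℓ ^ 2)))]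
  rw [← Equiv.sum_comp (shiftEquiv w t) (fun a => Nat.card {q : ZMod (ℓ ^ 2) × ZMod (ℓ ^ 2) //
      q.1 * q.2 = a * (t - a) - (d : ZMod (ℓ ^ 2))})]
  refine Finset.sum_congr rfl fun x _ => ?_
  have hval : shiftEquiv w t x * (t - shiftEquiv w t x) - (d : ZMod (ℓ ^ 2)) =
      ((w⁻¹ * w⁻¹ : (ZMod (ℓ ^ 2))ˣ) : ZMod (ℓ ^ 2)) *
        (t ^ 2 - 4 * (d : ZMod (ℓ ^ 2)) - x * x) := by
    have hv : (2 : ZMod (ℓ ^ 2)) * (↑w⁻¹ : ZMod (ℓ ^ 2)) = 1 := by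
      rw [← hw]; exact Units.mul_inv w
    show ((x + t) * (↑w⁻¹ : ZMod (ℓ ^ 2))) * (t - (x + t) * (↑w⁻¹ : ZMod (ℓ ^ 2))) -
        (d : ZMod (ℓ ^ 2)) = _
    rw [Units.val_mul]
    linear_combination ((d : ZMod (ℓ ^ 2)) * (2 * (↑w⁻¹ : ZMod (ℓ ^ 2)) + 1) -
      t * (↑w⁻¹ : ZMod (ℓ ^ 2)) * (x + t)) * hv
  rw [Nat.card_congr (Equiv.subtypeEquivRight
    (fun q : ZMod (ℓ ^ 2) × ZMod (ℓ ^ 2) => by rw [hval]))]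
  exact N_mul_unit (w⁻¹ * w⁻¹) _
private lemma filter_card_eq {α : Type*} [Fintype α] (p : α → Prop) [DecidablePred p] :
    (Finset.univ.filter p).card = Nat.card {x // p x} := by
  rw [Nat.card_eq_fintype_card, Fintype.card_subtype]

private lemma sq_roots_card {ℓ : ℕ} (hℓ : ℓ.Prime) (hodd : ℓ ≠ 2) (u : (ZMod (ℓ^2))ˣ) :
    Nat.card {x : ZMod (ℓ^2) // x * x = (u : ZMod (ℓ^2)) * (u : ZMod (ℓ^2))} = 2 := by
  haveI : NeZero ℓ := ⟨hℓ.pos.ne'⟩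
  haveI : Fact (1 < ℓ^2) := ⟨one_lt_pow₀ hℓ.one_lt two_ne_zero⟩
  classical
  have h2u : IsUnit ((2 : ZMod (ℓ^2)) * u) := (zmod_two_unit hℓ hodd).mul u.isUnit
  have hne : (u : ZMod (ℓ^2)) ≠ -(u : ZMod (ℓ^2)) := by
    intro h
    have h0 : (2 : ZMod (ℓ^2)) * u = 0 := by linear_combination h
    rw [h0, isUnit_zero_iff] at h2u
    exact zero_ne_one h2u
  have hiff : ∀ x : ZMod (ℓ^2), x * x = (u : ZMod (ℓ^2)) * (u : ZMod (ℓ^2)) ↔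
      (x = u ∨ x = -(u : ZMod (ℓ^2))) := by
    intro x
    constructor
    · intro h
      have hprod : (x - u) * (x + u) = 0 := by linear_combination h
      by_cases h1 : IsUnit (x - (u : ZMod (ℓ^2)))
      · right
        have := (h1.mul_right_eq_zero).mp hprod
        exact eq_neg_of_add_eq_zero_left this
      · left
        have h2 : IsUnit (x + (u : ZMod (ℓ^2))) := by
          rw [zmod_unit_iff hℓ]
          intro hd2
          have hd1 := zmod_dvd_of_not_unit hℓ h1
          have : (ℓ : ZMod (ℓ^2)) ∣ (2 : ZMod (ℓ^2)) * u := by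
            have := dvd_sub hd2 hd1
            have heq : (x + (u : ZMod (ℓ^2))) - (x - u) = 2 * u := by ring
            rwa [heq] at this
          exact (zmod_unit_iff hℓ _).mp h2u this
        have := (h2.mul_left_eq_zero).mp hprod
        exact sub_eq_zero.mp this
    · rintro (rfl | rfl) <;> ring
  rw [Nat.card_congr (Equiv.subtypeEquivRight hiff), ← filter_card_eq]
  have hset : Finset.univ.filter (fun x : ZMod (ℓ^2) =>
      x = u ∨ x = -(u : ZMod (ℓ^2))) = {(u : ZMod (ℓ^2)), -(u : ZMod (ℓ^2))} := by
    ext x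
    simp
  rw [hset, Finset.card_insert_of_notMem (by simp [hne]), Finset.card_singleton]

private lemma mod_roots_card {ℓ : ℕ} (hℓ : ℓ.Prime) (hodd : ℓ ≠ 2) (u : (ZMod (ℓ^2))ˣ) :
    Nat.card {x : ZMod (ℓ^2) //
      (ℓ : ZMod (ℓ^2)) ∣ ((u : ZMod (ℓ^2)) * (u : ZMod (ℓ^2)) - x * x)} = 2 * ℓ := by
  haveI : NeZero ℓ := ⟨hℓ.pos.ne'⟩
  classical
  have h2u : IsUnit ((2 : ZMod (ℓ^2)) * u) := (zmod_two_unit hℓ hodd).mul u.isUnit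
  have hiff : ∀ x : ZMod (ℓ^2), ((ℓ : ZMod (ℓ^2)) ∣ ((u : ZMod (ℓ^2)) * (u : ZMod (ℓ^2)) - x * x)) ↔
      ((ℓ : ZMod (ℓ^2)) ∣ ((u : ZMod (ℓ^2)) - x) ∨ (ℓ : ZMod (ℓ^2)) ∣ ((u : ZMod (ℓ^2)) + x)) := by
    intro x
    have heq : (u : ZMod (ℓ^2)) * (u : ZMod (ℓ^2)) - x * x = ((u : ZMod (ℓ^2)) - x) * ((u : ZMod (ℓ^2)) + x) := by ring
    rw [heq]
    constructor
    · exact zmod_dvd_mul hℓ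
    · rintro (h | h)
      · exact h.mul_right _
      · exact h.mul_left _
  rw [← filter_card_eq]
  calc (Finset.univ.filter (fun x : ZMod (ℓ^2) =>
        (ℓ : ZMod (ℓ^2)) ∣ ((u : ZMod (ℓ^2)) * (u : ZMod (ℓ^2)) - x * x))).card
      = (Finset.univ.filter (fun x : ZMod (ℓ^2) =>
        (ℓ : ZMod (ℓ^2)) ∣ ((u : ZMod (ℓ^2)) - x) ∨
          (ℓ : ZMod (ℓ^2)) ∣ ((u : ZMod (ℓ^2)) + x))).card := by
        congr 1
        exact Finset.filter_congr fun x _ => by rw [hiff]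
    _ = (Finset.univ.filter (fun x : ZMod (ℓ^2) => (ℓ : ZMod (ℓ^2)) ∣ ((u : ZMod (ℓ^2)) - x))).card
        + (Finset.univ.filter (fun x : ZMod (ℓ^2) =>
            (ℓ : ZMod (ℓ^2)) ∣ ((u : ZMod (ℓ^2)) + x))).card := by
        rw [Finset.filter_or]
        refine Finset.card_union_of_disjoint ?_
        rw [Finset.disjoint_filter]
        intro x _ h1 h2
        have hd : (ℓ : ZMod (ℓ^2)) ∣ (2 : ZMod (ℓ^2)) * u := by
          have := dvd_add h1 h2
          have heq : ((u : ZMod (ℓ^2)) - x) + (u + x) = 2 * u := by ring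
          rwa [heq] at this
        exact (zmod_unit_iff hℓ _).mp h2u hd
    _ = ℓ + ℓ := by
        have hbase : (Finset.univ.filter (fun x : ZMod (ℓ^2) => (ℓ : ZMod (ℓ^2)) ∣ x)).card = ℓ := by
          rw [filter_card_eq]
          exact zmod_card_dvd hℓ
        have hA : (Finset.univ.filter (fun x : ZMod (ℓ^2) =>
            (ℓ : ZMod (ℓ^2)) ∣ ((u : ZMod (ℓ^2)) - x))).card =
            (Finset.univ.filter (fun x : ZMod (ℓ^2) => (ℓ : ZMod (ℓ^2)) ∣ x)).card := by
          refine Finset.card_nbij' (fun x => (u : ZMod (ℓ^2)) - x) (fun y => (u : ZMod (ℓ^2)) - y)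
            ?_ ?_ ?_ ?_
          · intro a ha
            rw [Finset.mem_coe, Finset.mem_filter] at ha ⊢
            exact ⟨Finset.mem_univ _, ha.2⟩
          · intro a ha
            rw [Finset.mem_coe, Finset.mem_filter] at ha ⊢
            refine ⟨Finset.mem_univ _, ?_⟩
            rw [sub_sub_cancel]
            exact ha.2
          · intro a _; simp
          · intro a _; simp
        have hB : (Finset.univ.filter (fun x : ZMod (ℓ^2) =>
            (ℓ : ZMod (ℓ^2)) ∣ ((u : ZMod (ℓ^2)) + x))).card =
            (Finset.univ.filter (fun x : ZMod (ℓ^2) => (ℓ : ZMod (ℓ^2)) ∣ x)).card := by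
          refine Finset.card_nbij' (fun x => (u : ZMod (ℓ^2)) + x) (fun y => y - (u : ZMod (ℓ^2)))
            ?_ ?_ ?_ ?_
          · intro a ha
            rw [Finset.mem_coe, Finset.mem_filter] at ha ⊢
            exact ⟨Finset.mem_univ _, ha.2⟩
          · intro a ha
            rw [Finset.mem_coe, Finset.mem_filter] at ha ⊢
            refine ⟨Finset.mem_univ _, ?_⟩
            rw [add_sub_cancel]
            exact ha.2
          · intro a _; simp
          · intro a _; simp
        rw [hA, hB, hbase]
    _ = 2 * ℓ := by ring

/-- For an odd prime ℓ, a unit d of ℤ/ℓ²ℤ and t ∈ ℤ/ℓ²ℤ, the number of matrices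
γ ∈ GL₂(ℤ/ℓ²ℤ) with det γ = d and tr γ = t is: ℓ⁴ + ℓ³ − ℓ² if t² − 4d = 0;
ℓ⁴ − ℓ² if t² − 4d ≠ 0 and ℓ ∣ t² − 4d; ℓ⁴ + ℓ³ if t² − 4d is a quadratic residue;
ℓ⁴ − ℓ³ if t² − 4d is a quadratic non-residue. -/
theorem stmt_7 (ℓ : ℕ) (hℓ : ℓ.Prime) (hℓodd : ℓ ≠ 2)
    (d : (ZMod (ℓ ^ 2))ˣ) (t : ZMod (ℓ ^ 2)) :
    (t ^ 2 - 4 * (d : ZMod (ℓ ^ 2)) = 0 →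
      Nat.card {γ : Matrix.GeneralLinearGroup (Fin 2) (ZMod (ℓ ^ 2)) //
          (γ : Matrix (Fin 2) (Fin 2) (ZMod (ℓ ^ 2))).det = (d : ZMod (ℓ ^ 2)) ∧
          Matrix.trace (γ : Matrix (Fin 2) (Fin 2) (ZMod (ℓ ^ 2))) = t} =
        ℓ ^ 4 + ℓ ^ 3 - ℓ ^ 2) ∧
    ((t ^ 2 - 4 * (d : ZMod (ℓ ^ 2)) ≠ 0 ∧
        (ℓ : ZMod (ℓ ^ 2)) ∣ t ^ 2 - 4 * (d : ZMod (ℓ ^ 2))) →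
      Nat.card {γ : Matrix.GeneralLinearGroup (Fin 2) (ZMod (ℓ ^ 2)) //
          (γ : Matrix (Fin 2) (Fin 2) (ZMod (ℓ ^ 2))).det = (d : ZMod (ℓ ^ 2)) ∧
          Matrix.trace (γ : Matrix (Fin 2) (Fin 2) (ZMod (ℓ ^ 2))) = t} =
        ℓ ^ 4 - ℓ ^ 2) ∧
    ((∃ u : (ZMod (ℓ ^ 2))ˣ, t ^ 2 - 4 * (d : ZMod (ℓ ^ 2)) = (u : ZMod (ℓ ^ 2)) ^ 2) →
      Nat.card {γ : Matrix.GeneralLinearGroup (Fin 2) (ZMod (ℓ ^ 2)) //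
          (γ : Matrix (Fin 2) (Fin 2) (ZMod (ℓ ^ 2))).det = (d : ZMod (ℓ ^ 2)) ∧
          Matrix.trace (γ : Matrix (Fin 2) (Fin 2) (ZMod (ℓ ^ 2))) = t} =
        ℓ ^ 4 + ℓ ^ 3) ∧
    ((IsUnit (t ^ 2 - 4 * (d : ZMod (ℓ ^ 2))) ∧
        ¬∃ u : (ZMod (ℓ ^ 2))ˣ, t ^ 2 - 4 * (d : ZMod (ℓ ^ 2)) = (u : ZMod (ℓ ^ 2)) ^ 2) →
      Nat.card {γ : Matrix.GeneralLinearGroup (Fin 2) (ZMod (ℓ ^ 2)) //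
          (γ : Matrix (Fin 2) (Fin 2) (ZMod (ℓ ^ 2))).det = (d : ZMod (ℓ ^ 2)) ∧
          Matrix.trace (γ : Matrix (Fin 2) (Fin 2) (ZMod (ℓ ^ 2))) = t} =
        ℓ ^ 4 - ℓ ^ 3) := by
  haveI : NeZero ℓ := ⟨hℓ.pos.ne'⟩
  haveI : NeZero (ℓ ^ 2) := ⟨pow_ne_zero 2 hℓ.pos.ne'⟩
  classical
  have hm := main_count hℓ hℓodd d t
  have hl3 : 3 ≤ ℓ := by
    have := hℓ.two_le
    omega
  have hle1 : ℓ ≤ ℓ^2 := Nat.le_self_pow two_ne_zero ℓ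
  have hle2 : 2*ℓ ≤ ℓ^2 := by
    rw [pow_two]
    exact Nat.mul_le_mul_right ℓ (by omega)
  have hle3 : ℓ^2 ≤ ℓ^3 := Nat.pow_le_pow_right hℓ.pos (by omega)
  have hle4 : ℓ^3 ≤ ℓ^4 := Nat.pow_le_pow_right hℓ.pos (by omega)
  have hcu : (Finset.univ.filter (fun x : ZMod (ℓ^2) => IsUnit x)).card = ℓ^2 - ℓ := by
    rw [filter_card_eq]
    exact zmod_card_units_subtype hℓ
  have hcn : (Finset.univ.filter (fun x : ZMod (ℓ^2) => ¬ IsUnit x)).card = ℓ := by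
    rw [filter_card_eq]
    exact zmod_card_nonunits hℓ
  refine ⟨?_, ?_, ?_, ?_⟩
  -- Case 1 : Δ = 0
  · intro hΔ
    rw [hm, ← Finset.sum_filter_add_sum_filter_not Finset.univ (fun x : ZMod (ℓ^2) => IsUnit x)]
    have hval1 : ∀ x ∈ Finset.univ.filter (fun x : ZMod (ℓ^2) => IsUnit x),
        Nat.card {q : ZMod (ℓ^2) × ZMod (ℓ^2) //
          q.1 * q.2 = t ^ 2 - 4 * (d : ZMod (ℓ^2)) - x * x} = ℓ^2 - ℓ := by
      intro x hx
      rw [Finset.mem_filter] at hx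
      refine N_unit hℓ ?_
      rw [hΔ, zero_sub]
      exact (hx.2.mul hx.2).neg
    have hval2 : ∀ x ∈ Finset.univ.filter (fun x : ZMod (ℓ^2) => ¬ IsUnit x),
        Nat.card {q : ZMod (ℓ^2) × ZMod (ℓ^2) //
          q.1 * q.2 = t ^ 2 - 4 * (d : ZMod (ℓ^2)) - x * x} = ℓ * ℓ + 2 * (ℓ^2 - ℓ) := by
      intro x hx
      rw [Finset.mem_filter] at hx
      have hdx := zmod_dvd_of_not_unit hℓ hx.2
      have h0 : t ^ 2 - 4 * (d : ZMod (ℓ^2)) - x * x = 0 := by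
        rw [hΔ, zmod_mul_zero hdx hdx, sub_zero]
      simp only [h0]
      exact N_zero hℓ
    rw [Finset.sum_congr rfl hval1, Finset.sum_congr rfl hval2, Finset.sum_const,
      Finset.sum_const, smul_eq_mul, smul_eq_mul, hcu, hcn]
    zify [hle1, le_trans hle3 (le_trans hle4 (Nat.le_add_right _ _))]
    ring
  -- Case 2 : Δ ≠ 0, ℓ ∣ Δ
  · rintro ⟨hne, hdvd⟩
    rw [hm, ← Finset.sum_filter_add_sum_filter_not Finset.univ (fun x : ZMod (ℓ^2) => IsUnit x)]
    have hval1 : ∀ x ∈ Finset.univ.filter (fun x : ZMod (ℓ^2) => IsUnit x),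
        Nat.card {q : ZMod (ℓ^2) × ZMod (ℓ^2) //
          q.1 * q.2 = t ^ 2 - 4 * (d : ZMod (ℓ^2)) - x * x} = ℓ^2 - ℓ := by
      intro x hx
      rw [Finset.mem_filter] at hx
      refine N_unit hℓ ?_
      rw [zmod_unit_iff hℓ]
      intro hd2
      have hxx : (ℓ : ZMod (ℓ^2)) ∣ x * x := by
        have := dvd_sub hdvd hd2
        rwa [sub_sub_cancel] at this
      exact (zmod_unit_iff hℓ _).mp (hx.2.mul hx.2) hxx
    have hval2 : ∀ x ∈ Finset.univ.filter (fun x : ZMod (ℓ^2) => ¬ IsUnit x),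
        Nat.card {q : ZMod (ℓ^2) × ZMod (ℓ^2) //
          q.1 * q.2 = t ^ 2 - 4 * (d : ZMod (ℓ^2)) - x * x} = 2 * (ℓ^2 - ℓ) := by
      intro x hx
      rw [Finset.mem_filter] at hx
      have hdx := zmod_dvd_of_not_unit hℓ hx.2
      have h0 : t ^ 2 - 4 * (d : ZMod (ℓ^2)) - x * x = t ^ 2 - 4 * (d : ZMod (ℓ^2)) := by
        rw [zmod_mul_zero hdx hdx, sub_zero]
      simp only [h0]
      exact N_mid hℓ hdvd hne
    rw [Finset.sum_congr rfl hval1, Finset.sum_congr rfl hval2, Finset.sum_const,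
      Finset.sum_const, smul_eq_mul, smul_eq_mul, hcu, hcn]
    zify [hle1, le_trans hle3 hle4]
    ring
  -- Case 3 : Δ = u^2
  · rintro ⟨u, hΔ⟩
    rw [hm, ← Finset.sum_filter_add_sum_filter_not Finset.univ
      (fun x : ZMod (ℓ^2) => (ℓ : ZMod (ℓ^2)) ∣ (t ^ 2 - 4 * (d : ZMod (ℓ^2)) - x * x)),
      ← Finset.sum_filter_add_sum_filter_not (Finset.univ.filter
        (fun x : ZMod (ℓ^2) => (ℓ : ZMod (ℓ^2)) ∣ (t ^ 2 - 4 * (d : ZMod (ℓ^2)) - x * x)))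
      (fun x : ZMod (ℓ^2) => t ^ 2 - 4 * (d : ZMod (ℓ^2)) - x * x = 0)]
    have hval1 : ∀ x ∈ (Finset.univ.filter
        (fun x : ZMod (ℓ^2) => (ℓ : ZMod (ℓ^2)) ∣ (t ^ 2 - 4 * (d : ZMod (ℓ^2)) - x * x))).filter
        (fun x : ZMod (ℓ^2) => t ^ 2 - 4 * (d : ZMod (ℓ^2)) - x * x = 0),
        Nat.card {q : ZMod (ℓ^2) × ZMod (ℓ^2) //
          q.1 * q.2 = t ^ 2 - 4 * (d : ZMod (ℓ^2)) - x * x} = ℓ * ℓ + 2 * (ℓ^2 - ℓ) := by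
      intro x hx
      rw [Finset.mem_filter] at hx
      simp only [hx.2]
      exact N_zero hℓ
    have hval2 : ∀ x ∈ (Finset.univ.filter
        (fun x : ZMod (ℓ^2) => (ℓ : ZMod (ℓ^2)) ∣ (t ^ 2 - 4 * (d : ZMod (ℓ^2)) - x * x))).filter
        (fun x : ZMod (ℓ^2) => ¬ (t ^ 2 - 4 * (d : ZMod (ℓ^2)) - x * x = 0)),
        Nat.card {q : ZMod (ℓ^2) × ZMod (ℓ^2) //
          q.1 * q.2 = t ^ 2 - 4 * (d : ZMod (ℓ^2)) - x * x} = 2 * (ℓ^2 - ℓ) := by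
      intro x hx
      rw [Finset.mem_filter, Finset.mem_filter] at hx
      exact N_mid hℓ hx.1.2 hx.2
    have hval3 : ∀ x ∈ Finset.univ.filter
        (fun x : ZMod (ℓ^2) => ¬ (ℓ : ZMod (ℓ^2)) ∣ (t ^ 2 - 4 * (d : ZMod (ℓ^2)) - x * x)),
        Nat.card {q : ZMod (ℓ^2) × ZMod (ℓ^2) //
          q.1 * q.2 = t ^ 2 - 4 * (d : ZMod (ℓ^2)) - x * x} = ℓ^2 - ℓ := by
      intro x hx
      rw [Finset.mem_filter] at hx
      exact N_unit hℓ ((zmod_unit_iff hℓ _).mpr hx.2)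
    have hc1 : (Finset.univ.filter
        (fun x : ZMod (ℓ^2) => (ℓ : ZMod (ℓ^2)) ∣ (t ^ 2 - 4 * (d : ZMod (ℓ^2)) - x * x))).card
        = 2 * ℓ := by
      rw [filter_card_eq]
      refine Eq.trans ?_ (mod_roots_card hℓ hℓodd u)
      refine Nat.card_congr (Equiv.subtypeEquivRight fun x => ?_)
      rw [hΔ, pow_two (u : ZMod (ℓ^2))]
    have hc2 : ((Finset.univ.filter
        (fun x : ZMod (ℓ^2) => (ℓ : ZMod (ℓ^2)) ∣ (t ^ 2 - 4 * (d : ZMod (ℓ^2)) - x * x))).filter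
        (fun x : ZMod (ℓ^2) => t ^ 2 - 4 * (d : ZMod (ℓ^2)) - x * x = 0)).card = 2 := by
      have hset : (Finset.univ.filter
          (fun x : ZMod (ℓ^2) => (ℓ : ZMod (ℓ^2)) ∣ (t ^ 2 - 4 * (d : ZMod (ℓ^2)) - x * x))).filter
          (fun x : ZMod (ℓ^2) => t ^ 2 - 4 * (d : ZMod (ℓ^2)) - x * x = 0) =
          Finset.univ.filter (fun x : ZMod (ℓ^2) =>
            x * x = (u : ZMod (ℓ^2)) * (u : ZMod (ℓ^2))) := by
        ext x
        simp only [Finset.mem_filter, Finset.mem_univ, true_and]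
        constructor
        · rintro ⟨_, h2⟩
          have h3 := sub_eq_zero.mp h2
          rw [hΔ, pow_two (u : ZMod (ℓ^2))] at h3
          exact h3.symm
        · intro h
          have h2 : t ^ 2 - 4 * (d : ZMod (ℓ^2)) - x * x = 0 := by
            rw [hΔ, pow_two (u : ZMod (ℓ^2)), h, sub_self]
          exact ⟨h2 ▸ dvd_zero _, h2⟩
      rw [hset, filter_card_eq]
      exact sq_roots_card hℓ hℓodd u
    have hc3 : ((Finset.univ.filter
        (fun x : ZMod (ℓ^2) => (ℓ : ZMod (ℓ^2)) ∣ (t ^ 2 - 4 * (d : ZMod (ℓ^2)) - x * x))).filter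
        (fun x : ZMod (ℓ^2) => ¬ (t ^ 2 - 4 * (d : ZMod (ℓ^2)) - x * x = 0))).card = 2 * ℓ - 2 := by
      have := Finset.card_filter_add_card_filter_not
        (s := Finset.univ.filter (fun x : ZMod (ℓ^2) =>
          (ℓ : ZMod (ℓ^2)) ∣ (t ^ 2 - 4 * (d : ZMod (ℓ^2)) - x * x)))
        (fun x : ZMod (ℓ^2) => t ^ 2 - 4 * (d : ZMod (ℓ^2)) - x * x = 0)
      rw [hc1, hc2] at this
      omega
    have hc4 : (Finset.univ.filter
        (fun x : ZMod (ℓ^2) => ¬ (ℓ : ZMod (ℓ^2)) ∣ (t ^ 2 - 4 * (d : ZMod (ℓ^2)) - x * x))).card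
        = ℓ^2 - 2*ℓ := by
      have := Finset.card_filter_add_card_filter_not
        (s := (Finset.univ : Finset (ZMod (ℓ^2))))
        (fun x : ZMod (ℓ^2) => (ℓ : ZMod (ℓ^2)) ∣ (t ^ 2 - 4 * (d : ZMod (ℓ^2)) - x * x))
      rw [hc1, Finset.card_univ, ZMod.card] at this
      omega
    rw [Finset.sum_congr rfl hval1, Finset.sum_congr rfl hval2, Finset.sum_congr rfl hval3,
      Finset.sum_const, Finset.sum_const, Finset.sum_const, smul_eq_mul, smul_eq_mul,
      smul_eq_mul, hc2, hc3, hc4]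
    have h22 : 2 ≤ 2*ℓ := by omega
    zify [hle1, hle2, h22]
    ring
  -- Case 4 : Δ a non-square unit
  · rintro ⟨hunit, hnosq⟩
    rw [hm]
    have hall : ∀ x : ZMod (ℓ^2), IsUnit (t ^ 2 - 4 * (d : ZMod (ℓ^2)) - x * x) := by
      intro x
      by_contra hn
      have hdd := zmod_dvd_of_not_unit hℓ hn
      have hxu : IsUnit x := by
        by_contra hxn
        have hdx := zmod_dvd_of_not_unit hℓ hxn
        have hΔd : (ℓ : ZMod (ℓ^2)) ∣ t ^ 2 - 4 * (d : ZMod (ℓ^2)) := by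
          have hxx : (ℓ : ZMod (ℓ^2)) ∣ x * x := hdx.mul_right x
          have := dvd_add hdd hxx
          rwa [sub_add_cancel] at this
        exact (zmod_unit_iff hℓ _).mp hunit hΔd
      obtain ⟨c, hc⟩ := hdd
      obtain ⟨v, hv⟩ := (zmod_two_unit hℓ hℓodd).mul hxu
      set s : ZMod (ℓ^2) := c * (↑v⁻¹ : ZMod (ℓ^2)) with hsdef
      have hy : (x + (ℓ : ZMod (ℓ^2)) * s) * (x + (ℓ : ZMod (ℓ^2)) * s) =
          t ^ 2 - 4 * (d : ZMod (ℓ^2)) := by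
        have hvv : ((2 : ZMod (ℓ^2)) * x) * (↑v⁻¹ : ZMod (ℓ^2)) = 1 := by
          rw [← hv]; exact Units.mul_inv _
        have hll : (ℓ : ZMod (ℓ^2)) * (ℓ : ZMod (ℓ^2)) = 0 := zmod_lsq_zero
        rw [hsdef]
        linear_combination (-1 : ZMod (ℓ^2)) * hc + (ℓ : ZMod (ℓ^2)) * c * hvv +
          (c * (↑v⁻¹ : ZMod (ℓ^2)))^2 * hll
      have hyu : IsUnit (x + (ℓ : ZMod (ℓ^2)) * s) := by
        rw [zmod_unit_iff hℓ]
        intro hdy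
        have hdx : (ℓ : ZMod (ℓ^2)) ∣ x := by
          have := dvd_sub hdy (Dvd.intro s rfl)
          rwa [add_sub_cancel_right] at this
        exact (zmod_unit_iff hℓ x).mp hxu hdx
      have hq : ((hyu.unit : ZMod (ℓ^2)))^2 =
          (x + (ℓ : ZMod (ℓ^2)) * s) * (x + (ℓ : ZMod (ℓ^2)) * s) := by
        rw [hyu.unit_spec]; ring
      exact hnosq ⟨hyu.unit, by rw [hq]; exact hy.symm⟩
    rw [Finset.sum_congr rfl (fun x _ => N_unit hℓ (hall x)), Finset.sum_const, smul_eq_mul,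
      Finset.card_univ, ZMod.card]
    zify [hle1, hle4]
    ring
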